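/- Let X be a real vector space with an extended seminorm ρ, and let A ⊆ X be absolutely convex and bounded in the sense that for every ε > 0 there exist c > 0 and a finite set P ⊆ A with A ⊆ P + c·{x : ρ(x) < ε}. Then A ⊆ X_fin^ρ = {x : ρ(x) < ∞}. -/

import Mathlib

open scoped ENNReal Pointwise

/-- an absolutely convex set that is bounded for an extended
seminorm `ρ` is contained in the finiteness subspace of `ρ`. -/
theorem absolutely_convex_bounded_subset_fin {X : Type*} [AddCommGroup X]
    [Module ℝ X]
    (ρ : X → ℝ≥0∞)
    (hρsmul : ∀ (α : ℝ) (x : X), ρ (α • x) = (‖α‖₊ : ℝ≥0∞) * ρ x)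
    (hρadd : ∀ x y : X, ρ (x + y) ≤ ρ x + ρ y)
    (A : Set X) (hbal : Balanced ℝ A) (hconv : Convex ℝ A)
    (hbdd : ∀ ε : ℝ, 0 < ε → ∃ c : ℝ, 0 < c ∧ ∃ P : Finset X,
      (P : Set X) ⊆ A ∧
      A ⊆ (P : Set X) + c • {x : X | ρ x < ENNReal.ofReal ε}) :
    A ⊆ {x : X | ρ x < ⊤} := by
  intro x hxA
  simp only [Set.mem_setOf_eq]
  by_contra h
  have hx : ρ x = ⊤ := by
    rw [lt_top_iff_ne_top] at h; push_neg at h; exact h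
  obtain ⟨c, hc, P, hPA, hcov⟩ := hbdd 1 one_pos
  -- the points t_n • x, t_n = 1/(n+1), all lie in A
  set t : ℕ → ℝ := fun n => 1 / (n + 1) with ht
  have htpos : ∀ n, 0 < t n := fun n => by positivity
  have htle : ∀ n, t n ≤ 1 := fun n => by
    rw [ht]; rw [div_le_one (by positivity)]; linarith [Nat.cast_nonneg (α := ℝ) n]
  have hmemA : ∀ n, t n • x ∈ A := by
    intro n
    have : t n • x ∈ t n • A := Set.smul_mem_smul_set hxA
    exact hbal (t n) (by rw [Real.norm_eq_abs, abs_of_pos (htpos n)]; exact htle n) this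
  -- decompose each t n • x
  have hdecomp : ∀ n, ∃ p ∈ P, ∃ y, ρ y < ENNReal.ofReal 1 ∧ t n • x = p + c • y := by
    intro n
    obtain ⟨p, hp, b, hb, hsum⟩ := hcov (hmemA n)
    obtain ⟨y, hy, rfl⟩ := hb
    exact ⟨p, hp, y, hy, hsum.symm⟩
  choose p hp y hy hsum using hdecomp
  -- pigeonhole
  have : ∃ m n : ℕ, m ≠ n ∧ p m = p n := by
    have : ∃ m n : ℕ, m ≠ n ∧ (⟨p m, hp m⟩ : {z // z ∈ P}) = ⟨p n, hp n⟩ :=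
      Finite.exists_ne_map_eq_of_infinite _
    obtain ⟨m, n, hmn, he⟩ := this
    exact ⟨m, n, hmn, by simpa using he⟩
  obtain ⟨m, n, hmn, hpe⟩ := this
  have htne : t m ≠ t n := by
    intro he
    apply hmn
    simp only [ht, one_div, inv_inj, add_left_inj, Nat.cast_inj] at he
    omega
  -- the difference
  have hdiff : t m • x - t n • x = c • y m - c • y n := by
    rw [hsum m, hsum n, hpe]; abel
  have hρneg : ∀ z : X, ρ (-z) = ρ z := by
    intro z
    have := hρsmul (-1) z
    simpa using this
  have hfin : ρ (t m • x - t n • x) < ⊤ := by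
    rw [hdiff, sub_eq_add_neg]
    calc ρ (c • y m + -(c • y n)) ≤ ρ (c • y m) + ρ (-(c • y n)) := hρadd _ _
      _ = (‖c‖₊ : ℝ≥0∞) * ρ (y m) + (‖c‖₊ : ℝ≥0∞) * ρ (y n) := by
          rw [hρneg, hρsmul, hρsmul]
      _ < ⊤ := by
          have h1 : ρ (y m) < ⊤ := lt_of_lt_of_le (hy m) le_top
      
          have h2 : ρ (y n) < ⊤ := lt_of_lt_of_le (hy n) le_top
          exact ENNReal.add_lt_top.mpr ⟨ENNReal.mul_lt_top ENNReal.coe_lt_top h1,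
            ENNReal.mul_lt_top ENNReal.coe_lt_top h2⟩
  have hinf : ρ (t m • x - t n • x) = ⊤ := by
    rw [← sub_smul, hρsmul, hx]
    rw [ENNReal.mul_top]
    · simp only [ne_eq, ENNReal.coe_eq_zero, nnnorm_eq_zero]
      exact sub_ne_zero_of_ne htne
  rw [hinf] at hfin
  exact lt_irrefl _ hfin
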